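/- Let X and H be finite sets, let Y be a finite set of cardinality K ≥ 1, and let h : Y → X → H be a family of functions such that, for some real number p, for all x₁ ≠ x₂ in X the number of y ∈ Y with h_y(x₁) = h_y(x₂) equals p·K. Let α : X → ℂ satisfy Σ_{x∈X} |α_x|² = 1 and set D = Σ_{x∈X} α_x. Then Σ_{y∈Y} Σ_{u∈H} |Σ_{x : h_y(x) = u} α_x|² = K·(1 + p·(|D|² − 1)). -/

import Mathlib

/-- Central computation of the Simple Scrambling protocol: if every
pair x₁ ≠ x₂ collides under exactly p·K of the K hash functions h_y, and
Σ_x |α_x|² = 1, D = Σ_x α_x, then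
Σ_y Σ_u |Σ_{x : h_y(x)=u} α_x|² = K·(1 + p·(|D|² − 1)). -/
theorem simple_scrambling_normalization
    {X Y H : Type*} [Fintype X] [Fintype Y] [Fintype H] [DecidableEq H]
    {K : ℕ} (hK : 1 ≤ K) (hY : Fintype.card Y = K)
    (h : Y → X → H) (p : ℝ)
    (hcol : ∀ x₁ x₂ : X, x₁ ≠ x₂ →
      ((Finset.univ.filter (fun y : Y => h y x₁ = h y x₂)).card : ℝ) = p * K)
    (α : X → ℂ) (hα : ∑ x : X, ‖α x‖ ^ 2 = 1)
    (D : ℂ) (hD : D = ∑ x : X, α x) :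
    ∑ y : Y, ∑ u : H,
        ‖∑ x ∈ Finset.univ.filter (fun x : X => h y x = u), α x‖ ^ 2
      = K * (1 + p * (‖D‖ ^ 2 - 1)) := by
  classical
  set t : X → X → ℝ := fun x₁ x₂ => (α x₁ * (starRingEnd ℂ) (α x₂)).re with ht
  have key : ∀ (s : Finset X), ‖∑ x ∈ s, α x‖ ^ 2
      = ∑ x₁ ∈ s, ∑ x₂ ∈ s, t x₁ x₂ := by
    intro s
    have h1 : (‖∑ x ∈ s, α x‖ : ℝ) ^ 2
        = ((∑ x ∈ s, α x) * (starRingEnd ℂ) (∑ x ∈ s, α x)).re := by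
      rw [Complex.mul_conj, Complex.ofReal_re, Complex.normSq_eq_norm_sq]
    rw [h1, map_sum, Finset.sum_mul_sum]
    simp only [Complex.re_sum, ht]
  have tdiag : ∀ x : X, t x x = ‖α x‖ ^ 2 := by
    intro x
    simp [ht, Complex.mul_conj, Complex.sq_norm, Complex.normSq_apply]
  have step1 : ∀ y : Y,
      (∑ u : H, ‖∑ x ∈ Finset.univ.filter (fun x : X => h y x = u), α x‖ ^ 2)
      = ∑ x₁ : X, ∑ x₂ : X, if h y x₂ = h y x₁ then t x₁ x₂ else 0 := by
    intro y
    simp only [key]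
    have e1 : ∀ u : H,
        (∑ x₁ ∈ Finset.univ.filter (fun x : X => h y x = u),
          ∑ x₂ ∈ Finset.univ.filter (fun x : X => h y x = u), t x₁ x₂)
        = ∑ x₁ ∈ Finset.univ.filter (fun x : X => h y x = u),
            ∑ x₂ : X, if h y x₂ = h y x₁ then t x₁ x₂ else 0 := by
      intro u
      refine Finset.sum_congr rfl fun x₁ hx₁ => ?_
      rw [Finset.mem_filter] at hx₁
      rw [Finset.sum_filter, ← hx₁.2]
    simp only [e1]
    exact Finset.sum_fiberwise _ _ _
  have step2 :
      (∑ y : Y, ∑ x₁ : X, ∑ x₂ : X, if h y x₂ = h y x₁ then t x₁ x₂ else 0)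
      = ∑ x₁ : X, ∑ x₂ : X,
          ((Finset.univ.filter (fun y : Y => h y x₂ = h y x₁)).card : ℝ) * t x₁ x₂ := by
    rw [Finset.sum_comm]
    refine Finset.sum_congr rfl fun x₁ _ => ?_
    rw [Finset.sum_comm]
    refine Finset.sum_congr rfl fun x₂ _ => ?_
    rw [← Finset.sum_filter, Finset.sum_const, nsmul_eq_mul]
  have pointwise : ∀ x₁ x₂ : X,
      ((Finset.univ.filter (fun y : Y => h y x₂ = h y x₁)).card : ℝ) * t x₁ x₂
      = p * K * t x₁ x₂ + (if x₂ = x₁ then (K - p * K) * t x₁ x₂ else 0) := by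
    intro x₁ x₂
    by_cases hx : x₂ = x₁
    · subst hx
      simp only [if_pos rfl, eq_self_iff_true, Finset.filter_true]
      rw [show (Finset.univ : Finset Y).card = K from by rw [Finset.card_univ, hY],
        if_pos trivial]
      ring
    · rw [if_neg hx, hcol x₂ x₁ hx]
      ring
  have sumall : ∑ x₁ : X, ∑ x₂ : X, t x₁ x₂ = ‖D‖ ^ 2 := by
    rw [hD, key]
  have sumdiag : ∑ x : X, t x x = 1 := by
    simp only [tdiag]; exact hα
  simp only [step1, step2, pointwise, Finset.sum_add_distrib, ← Finset.mul_sum,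
    Finset.sum_ite_eq', Finset.mem_univ, if_pos]
  rw [sumall, sumdiag]
  ring
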